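/- On the elliptic curve E : y^2 + txy + (t+2)y = x^3 over Q(t), the point (0,0) has order exactly 3, the point (-1,-1) has order exactly 2, and the point (t+2, t+2) has order exactly 6. -/

import Mathlib

open WeierstrassCurve

noncomputable def E : WeierstrassCurve.Affine (RatFunc ℚ) :=
  ⟨RatFunc.X, 0, RatFunc.X + 2, 0, 0⟩

open scoped Classical

lemma some_congr {F : Type*} [Field F] {W : WeierstrassCurve.Affine F} {x₁ y₁ x₂ y₂ : F}
    (h₁ : W.Nonsingular x₁ y₁) (h₂ : W.Nonsingular x₂ y₂) (hx : x₁ = x₂) (hy : y₁ = y₂) :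
    Affine.Point.some _ _ h₁ = Affine.Point.some _ _ h₂ := by
  subst hx; subst hy; rfl

lemma poly_ne (c : ℚ) : (RatFunc.X + (algebraMap ℚ _ c) : RatFunc ℚ) ≠ 0 := by
  have h : (Polynomial.X + Polynomial.C c : Polynomial ℚ) ≠ 0 := Polynomial.X_add_C_ne_zero c
  have := RatFunc.algebraMap_ne_zero h
  rw [map_add, RatFunc.algebraMap_X, RatFunc.algebraMap_C, ← RatFunc.algebraMap_eq_C] at this
  convert this using 3
  exact RingHom.ext_rat _ _

lemma X2 : (RatFunc.X + 2 : RatFunc ℚ) ≠ 0 := by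
  have := poly_ne 2; rwa [map_ofNat] at this

lemma X3 : (RatFunc.X + 3 : RatFunc ℚ) ≠ 0 := by
  have := poly_ne 3; rwa [map_ofNat] at this

lemma Ea1 : E.a₁ = RatFunc.X := rfl
lemma Ea2 : E.a₂ = 0 := rfl
lemma Ea3 : E.a₃ = RatFunc.X + 2 := rfl
lemma Ea4 : E.a₄ = 0 := rfl
lemma Ea6 : E.a₆ = 0 := rfl

lemma hP : E.Nonsingular 0 0 := by
  rw [Affine.nonsingular_iff, Affine.equation_iff]
  simp only [Ea1, Ea2, Ea3, Ea4, Ea6]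
  refine ⟨by ring, Or.inr fun h => X2 (by linear_combination h)⟩

lemma hQ : E.Nonsingular (-1) (-1) := by
  rw [Affine.nonsingular_iff, Affine.equation_iff]
  simp only [Ea1, Ea2, Ea3, Ea4, Ea6]
  refine ⟨by ring, Or.inl fun h => X3 (by linear_combination -h)⟩

lemma hR : E.Nonsingular (RatFunc.X + 2) (RatFunc.X + 2) := by
  rw [Affine.nonsingular_iff, Affine.equation_iff]
  simp only [Ea1, Ea2, Ea3, Ea4, Ea6]
  refine ⟨by ring, Or.inr fun h => mul_ne_zero X2 X3 (by linear_combination h)⟩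

lemma negY_P : E.negY 0 0 = -(RatFunc.X + 2) := by
  simp only [Affine.negY, Ea1, Ea3]; ring

lemma negY_Q : E.negY (-1) (-1) = -1 := by
  simp only [Affine.negY, Ea1, Ea3]; ring

lemma hyP : (0 : RatFunc ℚ) ≠ E.negY 0 0 := by
  rw [negY_P]; intro h; exact X2 (by linear_combination h)

lemma hyR : (RatFunc.X + 2 : RatFunc ℚ) ≠ E.negY (RatFunc.X + 2) (RatFunc.X + 2) := by
  simp only [Affine.negY, Ea1, Ea3]
  intro h; exact mul_ne_zero X2 X3 (by linear_combination h)

lemma slope_P : E.slope 0 0 0 0 = 0 := by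
  rw [Affine.slope_of_Y_ne rfl hyP]
  simp only [Ea1, Ea2, Ea4]
  ring

lemma slope_R : E.slope (RatFunc.X + 2) (RatFunc.X + 2) (RatFunc.X + 2) (RatFunc.X + 2) = 2 := by
  rw [Affine.slope_of_Y_ne rfl hyR]
  simp only [Affine.negY, Ea1, Ea2, Ea3, Ea4]
  rw [div_eq_iff]
  · ring
  · intro h; exact mul_ne_zero X2 X3 (by linear_combination h)

lemma h2P : Affine.Point.some _ _ hP + Affine.Point.some _ _ hP = -Affine.Point.some _ _ hP := by
  rw [Affine.Point.add_self_of_Y_ne hyP, Affine.Point.neg_some]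
  apply some_congr
  · simp only [Affine.addX, slope_P, Ea1, Ea2]; ring
  · simp only [Affine.addY, Affine.negAddY, Affine.addX, Affine.negY, slope_P, Ea1, Ea2, Ea3]; ring

lemma h2Q : Affine.Point.some _ _ hQ + Affine.Point.some _ _ hQ = 0 :=
  Affine.Point.add_self_of_Y_eq negY_Q.symm

lemma h2R : Affine.Point.some _ _ hR + Affine.Point.some _ _ hR = Affine.Point.some _ _ hP := by
  rw [Affine.Point.add_self_of_Y_ne hyR]
  apply some_congr
  · simp only [Affine.addX, slope_R, Ea1, Ea2]; ring
  · simp only [Affine.addY, Affine.negAddY, Affine.addX, Affine.negY, slope_R, Ea1, Ea2, Ea3]; ring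

lemma P3 : (3 : ℕ) • Affine.Point.some _ _ hP = 0 := by
  rw [show (3:ℕ) = 2 + 1 from rfl, add_nsmul, two_nsmul, one_nsmul, h2P, neg_add_cancel]

/-- On `y² + txy + (t+2)y = x³` over `ℚ(t)`: `(0,0)` has order 3, `(-1,-1)` has order 2,
and `(t+2, t+2)` has order 6. -/
theorem torsion_orders :
    (∃ h : E.Nonsingular 0 0, addOrderOf (WeierstrassCurve.Affine.Point.some _ _ h) = 3) ∧
    (∃ h : E.Nonsingular (-1) (-1), addOrderOf (WeierstrassCurve.Affine.Point.some _ _ h) = 2) ∧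
    (∃ h : E.Nonsingular (RatFunc.X + 2) (RatFunc.X + 2),
      addOrderOf (WeierstrassCurve.Affine.Point.some _ _ h) = 6) := by
  haveI : Fact (Nat.Prime 2) := ⟨by norm_num⟩
  haveI : Fact (Nat.Prime 3) := ⟨by norm_num⟩
  refine ⟨⟨hP, ?_⟩, ⟨hQ, ?_⟩, ⟨hR, ?_⟩⟩
  · exact addOrderOf_eq_prime P3 (Affine.Point.some_ne_zero hP)
  · refine addOrderOf_eq_prime ?_ (Affine.Point.some_ne_zero hQ)
    rw [two_nsmul, h2Q]
  · have hR2 : (2 : ℕ) • Affine.Point.some _ _ hR = Affine.Point.some _ _ hP := by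
      rw [two_nsmul, h2R]
    have hR3 : (3 : ℕ) • Affine.Point.some _ _ hR = Affine.Point.some _ _ hP + Affine.Point.some _ _ hR := by
      rw [show (3:ℕ) = 2 + 1 from rfl, add_nsmul, one_nsmul, hR2]
    have hR6 : (6 : ℕ) • Affine.Point.some _ _ hR = 0 := by
      rw [show (6:ℕ) = 2 * 3 from rfl, mul_nsmul, hR2, P3]
    have hdvd := addOrderOf_dvd_of_nsmul_eq_zero hR6
    have hkey := addOrderOf_nsmul_eq_zero (Affine.Point.some _ _ hR)
    set n := addOrderOf (Affine.Point.some _ _ hR) with hn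
    have h0 : 1 ≤ n := by
      rcases Nat.eq_zero_or_pos n with h | h
      · rw [h, zero_dvd_iff] at hdvd; norm_num at hdvd
      · exact h
    have h1 : n ≠ 1 := by
      intro h; exact Affine.Point.some_ne_zero hR (AddMonoid.addOrderOf_eq_one_iff.mp h)
    have h2' : n ≠ 2 := by
      intro h; rw [h, hR2] at hkey; exact Affine.Point.some_ne_zero hP hkey
    have h3' : n ≠ 3 := by
      intro h
      rw [h, hR3, Affine.Point.add_of_X_ne (fun hc => X2 hc.symm)] at hkey
      exact Affine.Point.some_ne_zero _ hkey
    have hle := Nat.le_of_dvd (by norm_num) hdvd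
    interval_cases n
    · exact absurd rfl h1
    · exact absurd rfl h2'
    · exact absurd rfl h3'
    · exact absurd hdvd (by decide)
    · exact absurd hdvd (by decide)
    · rfl
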